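/- For every k ≥ 3, the n×n matrix A_n with n = 2k and entries a_{i,j} = min{i, n+1−i} + min{j, n+1−j} − min{|i−j|, n−|i−j|} (1 ≤ i, j ≤ n) is positive semidefinite; in fact A_{2k} = J(1,2k) + J(1,k) + J(k+1,2k) + 2 Σ_{p=2}^{k} J(p, p+k−1), where J(p,q) denotes the n×n matrix whose (i,j) entry is 1 if p ≤ i, j ≤ q and 0 otherwise. -/

import Mathlib

/-- The n x n matrix with 1-based entries
a_{i,j} = min(i, n+1-i) + min(j, n+1-j) - min(|i-j|, n-|i-j|).
Here indices i : Fin n represent the 1-based index i+1. -/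
noncomputable def Amat (n : ℕ) : Matrix (Fin n) (Fin n) ℝ := fun i j =>
  min ((i : ℝ) + 1) ((n : ℝ) - i) + min ((j : ℝ) + 1) ((n : ℝ) - j)
    - min |(i : ℝ) - (j : ℝ)| ((n : ℝ) - |(i : ℝ) - (j : ℝ)|)

/-- The n x n matrix J(p,q) (1-based) whose (i,j) entry is 1 if p <= i, j <= q
and 0 otherwise. -/
def Jmat (n p q : ℕ) : Matrix (Fin n) (Fin n) ℝ := fun i j =>
  if p ≤ (i : ℕ) + 1 ∧ (i : ℕ) + 1 ≤ q ∧ p ≤ (j : ℕ) + 1 ∧ (j : ℕ) + 1 ≤ q then 1 else 0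

set_option maxHeartbeats 1000000 in
lemma entry_eq (k a b : ℕ) (hk : 3 ≤ k) (ha : a < 2 * k) (hb : b < 2 * k) :
    min ((a : ℝ) + 1) (2 * (k : ℝ) - a) + min ((b : ℝ) + 1) (2 * (k : ℝ) - b)
      - min |(a : ℝ) - b| (2 * (k : ℝ) - |(a : ℝ) - b|)
    = (if 1 ≤ a + 1 ∧ a + 1 ≤ 2 * k ∧ 1 ≤ b + 1 ∧ b + 1 ≤ 2 * k then (1:ℝ) else 0)
      + (if 1 ≤ a + 1 ∧ a + 1 ≤ k ∧ 1 ≤ b + 1 ∧ b + 1 ≤ k then (1:ℝ) else 0)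
      + (if k + 1 ≤ a + 1 ∧ a + 1 ≤ 2 * k ∧ k + 1 ≤ b + 1 ∧ b + 1 ≤ 2 * k then (1:ℝ) else 0)
      + 2 * ((min (min a b + 1) k + 1 - max 2 (max a b + 2 - k) : ℕ) : ℝ) := by
  have h1 : min ((a : ℝ) + 1) (2 * (k : ℝ) - a) = ((min (a + 1) (2 * k - a) : ℕ) : ℝ) := by
    rw [Nat.cast_min, Nat.cast_sub (by omega)]; push_cast; ring_nf
  have h2 : min ((b : ℝ) + 1) (2 * (k : ℝ) - b) = ((min (b + 1) (2 * k - b) : ℕ) : ℝ) := by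
    rw [Nat.cast_min, Nat.cast_sub (by omega)]; push_cast; ring_nf
  have habs : |(a : ℝ) - b| = ((max a b - min a b : ℕ) : ℝ) := by
    rcases le_total a b with h | h
    · rw [max_eq_right h, min_eq_left h, Nat.cast_sub h, abs_sub_comm,
        abs_of_nonneg (by exact sub_nonneg.2 (by exact_mod_cast h))]
    · rw [max_eq_left h, min_eq_right h, Nat.cast_sub h,
        abs_of_nonneg (by exact sub_nonneg.2 (by exact_mod_cast h))]
  obtain ⟨d, hd, hdle⟩ : ∃ d : ℕ, |(a : ℝ) - b| = (d : ℝ) ∧ d = max a b - min a b :=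
    ⟨_, habs, rfl⟩
  have h3 : min |(a : ℝ) - b| (2 * (k : ℝ) - |(a : ℝ) - b|)
      = ((min d (2 * k - d) : ℕ) : ℝ) := by
    rw [hd, Nat.cast_min, Nat.cast_sub (by omega)]; push_cast; ring_nf
  rw [h1, h2, h3, sub_eq_iff_eq_add]
  split_ifs <;> norm_cast <;> omega

open Matrix in
lemma Jmat_posSemidef (n p q : ℕ) : (Jmat n p q).PosSemidef := by
  set v : Fin n → ℝ := fun i => if p ≤ (i : ℕ) + 1 ∧ (i : ℕ) + 1 ≤ q then 1 else 0 with hv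
  have hJ : Jmat n p q = Matrix.vecMulVec v v := by
    ext i j
    simp only [Matrix.vecMulVec_apply, hv, Jmat]
    split_ifs <;> simp_all
  rw [hJ]
  rw [Matrix.posSemidef_iff_dotProduct_mulVec]
  constructor
  · ext i j
    simp [Matrix.vecMulVec_apply, Matrix.conjTranspose_apply, mul_comm]
  · intro x
    have h : Matrix.vecMulVec v v *ᵥ x = (v ⬝ᵥ x) • v := by
      ext i
      simp only [Matrix.vecMulVec_apply, Matrix.mulVec, dotProduct, Finset.mul_sum,
        mul_assoc, Pi.smul_apply, smul_eq_mul]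
      rw [Finset.sum_mul]
      exact Finset.sum_congr rfl fun j _ => by ring
    rw [h]
    simp only [dotProduct_smul, smul_eq_mul]
    have hx : star x ⬝ᵥ v = v ⬝ᵥ x := by
      simp [dotProduct, mul_comm]
    rw [hx]
    exact mul_self_nonneg _

/-- For k >= 3, with n = 2k:
A_{2k} = J(1,2k) + J(1,k) + J(k+1,2k) + 2 * sum_{p=2}^{k} J(p, p+k-1),
and A_{2k} is positive semidefinite. -/
theorem stmt16 (k : ℕ) (hk : 3 ≤ k) :
    Amat (2 * k) = Jmat (2 * k) 1 (2 * k) + Jmat (2 * k) 1 k + Jmat (2 * k) (k + 1) (2 * k)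
        + (2 : ℝ) • ∑ p ∈ Finset.Icc 2 k, Jmat (2 * k) p (p + k - 1) ∧
      (Amat (2 * k)).PosSemidef := by
  have hid : Amat (2 * k) = Jmat (2 * k) 1 (2 * k) + Jmat (2 * k) 1 k
      + Jmat (2 * k) (k + 1) (2 * k)
      + (2 : ℝ) • ∑ p ∈ Finset.Icc 2 k, Jmat (2 * k) p (p + k - 1) := by
    ext i j
    have ha := i.isLt
    have hb := j.isLt
    simp only [Matrix.add_apply, Matrix.smul_apply, Matrix.sum_apply, Finset.sum_apply, Amat, Jmat, smul_eq_mul]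
    rw [Finset.sum_boole]
    have hfilter : Finset.filter
        (fun p => p ≤ (i : ℕ) + 1 ∧ (i : ℕ) + 1 ≤ p + k - 1 ∧ p ≤ (j : ℕ) + 1 ∧ (j : ℕ) + 1 ≤ p + k - 1)
        (Finset.Icc 2 k)
        = Finset.Icc (max 2 (max (i : ℕ) (j : ℕ) + 2 - k)) (min (min (i : ℕ) (j : ℕ) + 1) k) := by
      ext p; simp only [Finset.mem_filter, Finset.mem_Icc]; omega
    rw [hfilter, Nat.card_Icc]
    push_cast
    convert entry_eq k (i : ℕ) (j : ℕ) hk ha hb using 2 <;> push_cast <;> ring_nf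
  refine ⟨hid, ?_⟩
  rw [hid]
  have hsum : (∑ p ∈ Finset.Icc 2 k, Jmat (2 * k) p (p + k - 1)).PosSemidef := by
    refine Finset.sum_induction _ _ (fun a b ha hb => ha.add hb) Matrix.PosSemidef.zero ?_
    intro p _; exact Jmat_posSemidef _ _ _
  have h2s : (2 : ℝ) • ∑ p ∈ Finset.Icc 2 k, Jmat (2 * k) p (p + k - 1)
      = (∑ p ∈ Finset.Icc 2 k, Jmat (2 * k) p (p + k - 1))
        + ∑ p ∈ Finset.Icc 2 k, Jmat (2 * k) p (p + k - 1) := two_smul ℝ _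
  rw [h2s]
  exact (((Jmat_posSemidef _ _ _).add (Jmat_posSemidef _ _ _)).add (Jmat_posSemidef _ _ _)).add
    (hsum.add hsum)
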